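/- (Reverse skew-product bound) With the same setup as the forward bound, suppose instead the reverse skew products satisfy â_{n,n−j} := Π_{i=n−j+1}^{n} â_{i,i−1} ≤ 1 for 1 ≤ j ≤ n−1. Then for every 1 ≤ j ≤ n−1, Σ_{i=1}^{j} (τ^{n−(i−1),l} − τ^{n−i,r}) ≤ (â_{n,n−j} − 1)·τ^{n−j,r} + b̂_{n,n−1} + Σ_{i=n−j+1}^{n−1} â_{n,i}·b̂_{i,i−1}. -/

import Mathlib

private lemma prod_Icc_split (f : ℕ → ℝ) (a b : ℕ) (h : a ≤ b) :
    ∏ i ∈ Finset.Icc a b, f i = f a * ∏ i ∈ Finset.Icc (a+1) b, f i := by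
  rw [Finset.Icc_add_one_left_eq_Ioc, ← Finset.Ioc_insert_left h, Finset.prod_insert (by simp)]

private lemma sum_Icc_split (f : ℕ → ℝ) (a b : ℕ) (h : a ≤ b) :
    ∑ i ∈ Finset.Icc a b, f i = f a + ∑ i ∈ Finset.Icc (a+1) b, f i := by
  rw [Finset.Icc_add_one_left_eq_Ioc, ← Finset.Ioc_insert_left h, Finset.sum_insert (by simp)]


/-- Reverse skew-product bound: with declared skews
â i = â_{i,i−1} > 0 and offsets b̂ i = b̂_{i,i−1}, reverse skew products
â_{n,n−j} = ∏_{i=n−j+1}^{n} â_{i,i−1} ≤ 1 for 1 ≤ j ≤ n−1, parameter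
consistency l i = â i · r (i−1) + b̂ i for 2 ≤ i ≤ n, and causality
l i ≤ r i, we have for every 1 ≤ j ≤ n−1:
Σ_{i=1}^{j} (τ^{n−(i−1),l} − τ^{n−i,r})
  ≤ (â_{n,n−j} − 1)·τ^{n−j,r} + b̂_{n,n−1}
    + Σ_{i=n−j+1}^{n−1} â_{n,i}·b̂_{i,i−1}. -/
theorem stmt6 (n : ℕ) (hn : 2 ≤ n) (ahat bhat l r : ℕ → ℝ)
    (hahat : ∀ i ∈ Finset.Icc 2 n, 0 < ahat i)
    (hrev : ∀ j ∈ Finset.Icc 1 (n - 1),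
      (∏ i ∈ Finset.Icc (n - j + 1) n, ahat i) ≤ 1)
    (hcons : ∀ i ∈ Finset.Icc 2 n, l i = ahat i * r (i - 1) + bhat i)
    (hcaus : ∀ i, l i ≤ r i) :
    ∀ j ∈ Finset.Icc 1 (n - 1),
      (∑ i ∈ Finset.Icc 1 j, (l (n - (i - 1)) - r (n - i)))
        ≤ ((∏ i ∈ Finset.Icc (n - j + 1) n, ahat i) - 1) * r (n - j) + bhat n
          + ∑ i ∈ Finset.Icc (n - j + 1) (n - 1),
              (∏ k ∈ Finset.Icc (i + 1) n, ahat k) * bhat i := by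
  intro j hj
  simp only [Finset.mem_Icc] at hj
  obtain ⟨hj1, hj2⟩ := hj
  induction j with
  | zero => omega
  | succ j ih =>
    rcases Nat.eq_or_lt_of_le hj1 with h1 | h1
    · -- base case j + 1 = 1
      have hj0 : j = 0 := by omega
      subst hj0
      have e1 : n - 1 + 1 = n := by omega
      simp only [Nat.zero_add, e1, Finset.Icc_self, Finset.sum_singleton,
        Finset.prod_singleton, Finset.Icc_eq_empty (by omega : ¬ n ≤ n - 1),
        Finset.sum_empty]
      have hl : l n = ahat n * r (n - 1) + bhat n :=
        hcons n (Finset.mem_Icc.mpr ⟨hn, le_refl n⟩)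
      simp only [Nat.sub_self, Nat.sub_zero]
      rw [hl]; ring_nf
      exact le_refl _
    · -- inductive step: 1 ≤ j, j + 1 ≤ n - 1
      have hj1' : 1 ≤ j := by omega
      have hj2' : j ≤ n - 1 := by omega
      have IH := ih hj1' hj2'
      have e1 : n - (j + 1) + 1 = n - j := by omega
      have e2 : n - j + 1 ≤ n := by omega
      have e3 : j + 1 - 1 = j := rfl
      have e4 : n - j - 1 = n - (j + 1) := by omega
      -- split the LHS sum
      rw [Finset.sum_Icc_succ_top (by omega : 1 ≤ j + 1), e1, e3]
      -- split the product and the offset sum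
      rw [prod_Icc_split ahat (n - j) n (by omega),
        sum_Icc_split _ (n - j) (n - 1) (by omega)]
      set P : ℝ := ∏ i ∈ Finset.Icc (n - j + 1) n, ahat i with hP
      have hP1 : P ≤ 1 := hrev j (Finset.mem_Icc.mpr ⟨hj1', hj2'⟩)
      have hl : l (n - j) = ahat (n - j) * r (n - (j + 1)) + bhat (n - j) := by
        have := hcons (n - j) (Finset.mem_Icc.mpr ⟨by omega, by omega⟩)
        rwa [e4] at this
      have key : (P - 1) * r (n - j) ≤ (P - 1) * l (n - j) :=
        mul_le_mul_of_nonpos_left (hcaus (n - j)) (by linarith)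
      have key2 : (P - 1) * r (n - j)
          ≤ ahat (n - j) * P * r (n - (j + 1)) + P * bhat (n - j) - l (n - j) := by
        calc (P - 1) * r (n - j) ≤ (P - 1) * l (n - j) := key
          _ = ahat (n - j) * P * r (n - (j + 1)) + P * bhat (n - j) - l (n - j) := by
              rw [hl]; ring
      linarith [IH, key2]
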